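/- arXiv:2001.09527 — 2 statements merged into one kernel-verified Lean document; each statement's English description precedes it below -/
import Mathlib

section
/- For constant matrices X, Y ∈ M_n(ℂ), the curve t ↦ exp(t(X+Y))·exp(−tX) is the flow of the time-dependent field s ↦ exp(sX)·Y·exp(−sX); i.e., it solves γ'(t) = γ(t)·(exp(tX)·Y·exp(−tX)) with γ(0) = I. -/
open NormedSpace

attribute [local instance] Matrix.linftyOpNormedRing Matrix.linftyOpNormedAlgebra

lemma aux_deriv {n : ℕ} (A : Matrix (Fin n) (Fin n) ℂ) (t : ℝ) :
    HasDerivAt (fun u : ℝ => exp (u • A)) (exp (t • A) * A) t := by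
  have h := (hasDerivAt_exp_smul_const A ((t : ℝ) : ℂ)).scomp t Complex.ofRealCLM.hasDerivAt
  simp only [Complex.ofRealCLM_apply, Function.comp_def] at h
  have : ∀ u : ℝ, ((u : ℂ)) • A = u • A := fun u => by
    rw [← Complex.coe_smul]
  simp only [this, Complex.ofReal_one, one_smul] at h
  exact h

/-- `t ↦ exp(t(X+Y)) exp(−tX)` is the chronological flow of `s ↦ exp(sX) Y exp(−sX)`. -/
theorem stmt_5 (n : ℕ) (X Y : Matrix (Fin n) (Fin n) ℂ) :
    (fun t : ℝ => exp (t • (X + Y)) * exp (-(t • X))) 0 = 1 ∧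
    ∀ t : ℝ, HasDerivAt (fun t : ℝ => exp (t • (X + Y)) * exp (-(t • X)))
      ((exp (t • (X + Y)) * exp (-(t • X))) *
        (exp (t • X) * Y * exp (-(t • X)))) t := by
  constructor
  · simp [exp_zero]
  intro t
  have h1 := aux_deriv (X + Y) t
  have h2 := aux_deriv (-X) t
  have hsm : ∀ u : ℝ, u • (-X) = -(u • X) := fun u => smul_neg u X
  simp only [hsm] at h2
  have h := h1.mul h2
  convert (by exact h : HasDerivAt (fun t : ℝ => exp (t • (X + Y)) * exp (-(t • X))) _ t) using 1
  have hinv : exp (-(t • X)) * exp (t • X) = 1 := by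
    refine (exp_add_of_commute ((Commute.refl (t • X)).neg_left)).symm.trans ?_
    simp [exp_zero]
  have hcomm : Commute X (exp (-(t • X))) :=
    (((Commute.refl X).smul_right t).neg_right).exp_right
  calc exp (t • (X + Y)) * exp (-(t • X)) * (exp (t • X) * Y * exp (-(t • X)))
      = exp (t • (X + Y)) * (exp (-(t • X)) * exp (t • X)) * Y * exp (-(t • X)) := by
        noncomm_ring
    _ = exp (t • (X + Y)) * Y * exp (-(t • X)) := by rw [hinv, mul_one]
    _ = exp (t • (X + Y)) * (X + Y) * exp (-(t • X))
        + exp (t • (X + Y)) * (exp (-(t • X)) * (-X)) := by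
        rw [← hcomm.neg_left.eq]; noncomm_ring
end

section
/- The Fréchet differential of the matrix exponential exp : M_n(ℂ) → M_n(ℂ) at X in the direction Y is D(exp)_X(Y) = (∫_0^1 exp(sX)·Y·exp(−sX) ds)·exp(X). -/
open NormedSpace

attribute [local instance] Matrix.linftyOpNormedRing Matrix.linftyOpNormedAlgebra
attribute [local instance] Matrix.instCompleteSpace

namespace Stmt7Aux

variable {n : ℕ}

local notation "M" => Matrix (Fin n) (Fin n) ℂ

lemma expRC : (exp : M → M) = exp := rfl

lemma derivL (X : M) (s : ℝ) :
    HasDerivAt (fun s : ℝ => exp (s • X)) (exp (s • X) * X) s := by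
  have h := hasDerivAt_exp_smul_const (𝕂 := ℝ) X s
  exact h

lemma derivR (Z : M) (s : ℝ) :
    HasDerivAt (fun s : ℝ => exp ((1 - s) • Z)) (-(Z * exp ((1 - s) • Z))) s := by
  have h := hasDerivAt_exp_smul_const' (𝕂 := ℝ) Z (1 - s)
  have hin : HasDerivAt (fun s : ℝ => 1 - s) (-1) s := by
    simpa using (hasDerivAt_id s).const_sub 1
  have := HasDerivAt.scomp s h hin
  simp [Function.comp, neg_smul] at this
  exact this

lemma contAux (X A B : M) : Continuous fun s : ℝ => exp (s • X) * A * exp ((1 - s) • B) := by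
  have c1 : Continuous fun s : ℝ => exp (s • X) :=
    exp_continuous.comp (continuous_id.smul continuous_const)
  have c2 : Continuous fun s : ℝ => exp ((1 - s) • B) :=
    exp_continuous.comp ((continuous_const.sub continuous_id).smul continuous_const)
  exact (c1.mul continuous_const).mul c2

/-- Duhamel's formula for the matrix exponential. -/
lemma duhamel (X Z : M) :
    exp (X + Z) - exp X
      = ∫ s in (0:ℝ)..1, exp (s • X) * Z * exp ((1 - s) • (X + Z)) := by
  have hF : ∀ s ∈ Set.uIcc (0:ℝ) 1,
      HasDerivAt (fun s : ℝ => exp (s • X) * exp ((1 - s) • (X + Z)))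
        (-(exp (s • X) * Z * exp ((1 - s) • (X + Z)))) s := by
    intro s _
    have h := (derivL X s).mul (derivR (X + Z) s)
    refine h.congr_deriv ?_
    rw [mul_neg]
    noncomm_ring
  have key := intervalIntegral.integral_eq_sub_of_hasDerivAt hF
    (((contAux X Z (X + Z)).neg).intervalIntegrable 0 1)
  rw [intervalIntegral.integral_neg] at key
  simp only [one_smul, sub_self, sub_zero, zero_smul, exp_zero, one_mul, mul_one] at key
  rw [← neg_sub, ← key, neg_neg]

end Stmt7Aux

attribute [local instance] Matrix.linftyOpNormedRing Matrix.linftyOpNormedAlgebra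
attribute [local instance] Matrix.instCompleteSpace

/-- Directional derivative of the matrix exponential:
`D(exp)_X(Y) = (∫₀¹ exp(sX) Y exp(−sX) ds) · exp X`. -/
theorem stmt_7 (n : ℕ) (X Y : Matrix (Fin n) (Fin n) ℂ) :
    HasDerivAt (fun ε : ℝ => exp (X + ε • Y))
      ((∫ s in (0:ℝ)..1, exp (s • X) * Y * exp (-(s • X))) * exp X) 0 := by
  set g : ℝ → Matrix (Fin n) (Fin n) ℂ := fun ε => ∫ s in (0:ℝ)..1,
      exp (s • X) * Y * exp ((1 - s) • (X + ε • Y)) with hg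
  -- `g` is continuous (parametric interval integral of a jointly continuous function)
  have hgc : Continuous g := by
    apply intervalIntegral.continuous_parametric_intervalIntegral_of_continuous'
      (f := fun (ε : ℝ) (s : ℝ) => exp (s • X) * Y * exp ((1 - s) • (X + ε • Y)))
    have : Continuous fun p : ℝ × ℝ => exp ((1 - p.2) • (X + p.1 • Y)) :=
      exp_continuous.comp ((continuous_const.sub continuous_snd).smul
        (continuous_const.add (continuous_fst.smul continuous_const)))
    exact ((exp_continuous.comp (continuous_snd.smul continuous_const)).mul
      continuous_const).mul this
  -- the exact difference identity from Duhamel's formula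
  have hdiff : ∀ ε : ℝ, exp (X + ε • Y) - exp X = ε • g ε := by
    intro ε
    rw [Stmt7Aux.duhamel X (ε • Y), hg]
    simp_rw [mul_smul_comm, smul_mul_assoc, intervalIntegral.integral_smul]
  -- identify `g 0` with the stated derivative
  have hL : g 0 = (∫ s in (0:ℝ)..1, exp (s • X) * Y * exp (-(s • X))) * exp X := by
    have hsplit : ∀ s : ℝ, exp ((1 - s) • X) = exp (-(s • X)) * exp X := by
      intro s
      have hc : Commute (-(s • X)) X := (((Commute.refl X).smul_left s).neg_left)
      rw [sub_smul, one_smul, sub_eq_neg_add, Matrix.exp_add_of_commute _ _ hc]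
    have hint : @IntervalIntegrable _ PseudoMetricSpace.toUniformSpace.toTopologicalSpace _
        (fun s : ℝ => exp (s • X) * Y * exp (-(s • X))) MeasureTheory.volume 0 1 := by
      have c1 : Continuous fun s : ℝ => exp (s • X) :=
        exp_continuous.comp (continuous_id.smul continuous_const)
      have c2 : Continuous fun s : ℝ => exp (-(s • X)) :=
        exp_continuous.comp ((continuous_id.smul continuous_const).neg)
      exact (((c1.mul continuous_const).mul c2)).intervalIntegrable 0 1
    have := ContinuousLinearMap.intervalIntegral_comp_comm
      ((ContinuousLinearMap.mul ℂ (Matrix (Fin n) (Fin n) ℂ)).flip (exp X)) hint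
    simp only [ContinuousLinearMap.flip_apply, ContinuousLinearMap.mul_apply'] at this
    rw [hg]
    simp only [zero_smul, add_zero]
    simp_rw [hsplit, ← mul_assoc]
    exact this
  -- conclude via the slope characterization of the derivative
  rw [← hL]; refine hasDerivAt_iff_tendsto_slope.mpr ?_
  have hev : slope (fun ε : ℝ => exp (X + ε • Y)) 0 =ᶠ[nhdsWithin (0:ℝ) {(0:ℝ)}ᶜ] g := by
    filter_upwards [self_mem_nhdsWithin] with ε hε
    have hε' : ε ≠ 0 := hε
    rw [slope_def_module, sub_zero]
    simp only [zero_smul, add_zero]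
    rw [hdiff ε, smul_smul, inv_mul_cancel₀ hε', one_smul]
  exact Filter.Tendsto.congr' hev.symm ((hgc.tendsto 0).mono_left nhdsWithin_le_nhds)
end
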